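/- Let N ≥ 1 and m : Fin N → ℕ, and for k ∈ ℕ let f(k) be the number of functions a : Fin N → ℕ with a i ≤ m i for all i and ∑ᵢ a i = k. Then f is log-concave: f(k)² ≥ f(k−1) · f(k+1) for every k ≥ 1; equivalently, k ↦ ln f(k) is concave where f is nonzero. -/

import Mathlib

namespace BoxLC

def LC (f : ℤ → ℕ) : Prop := ∀ x : ℤ, f (x - 1) * f (x + 1) ≤ f x ^ 2

def IS (f : ℤ → ℕ) : Prop := ∀ a b c : ℤ, a ≤ b → b ≤ c → f a ≠ 0 → f c ≠ 0 → f b ≠ 0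

lemma spread {f : ℤ → ℕ} (hL : LC f) (hS : IS f) :
    ∀ (n : ℕ) (b : ℤ), f (b + n + 1) * f (b - 1) ≤ f (b + n) * f b := by
  intro n
  induction n with
  | zero =>
    intro b
    have := hL b
    simp only [Nat.cast_zero, add_zero, sq] at *
    linarith [this]
  | succ n ih =>
    intro b
    have e1 : b + ((n : ℤ) + 1) + 1 = (b + n + 1) + 1 := by ring
    have e2 : b + ((n : ℤ) + 1) = (b + n + 1) := by ring
    push_cast
    rw [e1, e2]
    set c := b + (n : ℤ) with hc
    by_cases h1 : f (c + 1 + 1) = 0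
    · simp [h1]
    by_cases h2 : f (b - 1) = 0
    · simp [h2]
    have hc0 : f c ≠ 0 :=
      hS (b - 1) c (c + 1 + 1) (by simp [hc]; linarith) (by linarith) h2 h1
    have hLx := hL (c + 1)
    have e3 : c + 1 - 1 = c := by ring
    rw [e3, sq] at hLx
    have hIx := ih b
    rw [← hc] at hIx
    have key : f (c + 1 + 1) * f (b - 1) * f c ≤ f (c + 1) * f b * f c := by
      calc f (c + 1 + 1) * f (b - 1) * f c
          = (f c * f (c + 1 + 1)) * f (b - 1) := by ring
        _ ≤ (f (c + 1) * f (c + 1)) * f (b - 1) := Nat.mul_le_mul_right _ hLx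
        _ = f (c + 1) * (f (c + 1) * f (b - 1)) := by ring
        _ ≤ f (c + 1) * (f c * f b) := Nat.mul_le_mul_left _ hIx
        _ = f (c + 1) * f b * f c := by ring
    exact Nat.le_of_mul_le_mul_right key (Nat.pos_of_ne_zero hc0)

/-- general spread form: for `b ≤ a`, `f (a+1) * f (b-1) ≤ f a * f b`. -/
lemma spread' {f : ℤ → ℕ} (hL : LC f) (hS : IS f) {a b : ℤ} (h : b ≤ a) :
    f (a + 1) * f (b - 1) ≤ f a * f b := by
  obtain ⟨n, rfl⟩ : ∃ n : ℕ, a = b + n := ⟨(a - b).toNat, by omega⟩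
  exact spread hL hS n b

end BoxLC

namespace BoxLC

def win (f : ℤ → ℕ) (m : ℕ) (x : ℤ) : ℕ := ∑ j ∈ Finset.range (m + 1), f (x - j)

lemma win_IS {f : ℤ → ℕ} (hS : IS f) (m : ℕ) : IS (win f m) := by
  intro a b c hab hbc ha hc
  simp only [win] at *
  obtain ⟨j₁, hj₁, ha1⟩ : ∃ j ∈ Finset.range (m+1), f (a - j) ≠ 0 := by
    by_contra h
    push_neg at h
    exact ha (Finset.sum_eq_zero h)
  obtain ⟨j₂, hj₂, hc1⟩ : ∃ j ∈ Finset.range (m+1), f (c - j) ≠ 0 := by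
    by_contra h
    push_neg at h
    exact hc (Finset.sum_eq_zero h)
  simp only [Finset.mem_range] at hj₁ hj₂
  set p : ℤ := a - j₁ with hp
  set q : ℤ := c - j₂ with hq
  set y : ℤ := max (b - m) (min p q) with hy
  have hylo : min p q ≤ y := le_max_right _ _
  have hyhi : y ≤ max p q := by
    apply max_le
    · refine le_trans (by omega : b - (m:ℤ) ≤ q) (le_max_right _ _)
    · exact le_trans (min_le_left _ _) (le_max_left _ _)
  have hmin : f (min p q) ≠ 0 := by
    rcases le_total p q with h | h
    · rwa [min_eq_left h]
    · rwa [min_eq_right h]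
  have hmax : f (max p q) ≠ 0 := by
    rcases le_total p q with h | h
    · rwa [max_eq_right h]
    · rwa [max_eq_left h]
  have hfy : f y ≠ 0 := hS _ _ _ hylo hyhi hmin hmax
  have hjb : ∃ j : ℕ, j < m + 1 ∧ y = b - j := by
    refine ⟨(b - y).toNat, by omega, by omega⟩
  obtain ⟨j, hjm, hyeq⟩ := hjb
  intro hzero
  apply hfy
  rw [hyeq]
  exact Finset.sum_eq_zero_iff.mp hzero j (Finset.mem_range.mpr hjm)

end BoxLC

namespace BoxLC

lemma win_LC {f : ℤ → ℕ} (hL : LC f) (hS : IS f) (m : ℕ) : LC (win f m) := by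
  intro x
  simp only [win, sq, Finset.sum_mul_sum]
  rw [← Finset.sum_product', ← Finset.sum_product']
  set s : Finset (ℕ × ℕ) := Finset.range (m+1) ×ˢ Finset.range (m+1) with hs
  set l : ℕ × ℕ → ℕ := fun p => f (x - p.1) * f (x - p.2) with hl
  set r : ℕ × ℕ → ℕ := fun p => f (x - 1 - p.1) * f (x + 1 - p.2) with hr
  show ∑ p ∈ s, r p ≤ ∑ p ∈ s, l p
  set σ : ℕ × ℕ → ℕ × ℕ := fun p =>
    if p.2 = 0 then (0, p.1) else if p.1 = m then (p.2, m) else (p.1 + 1, p.2 - 1) with hσ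
  set τ : ℕ × ℕ → ℕ × ℕ := fun q =>
    if q.1 = 0 then (q.2, 0) else if q.2 = m then (m, q.1) else (q.1 - 1, q.2 + 1) with hτ
  have hmem : ∀ p : ℕ × ℕ, p ∈ s ↔ p.1 ≤ m ∧ p.2 ≤ m := by
    intro p
    simp [hs, Finset.mem_product, Nat.lt_succ_iff]
  calc ∑ p ∈ s, r p ≤ ∑ p ∈ s, l (σ p) := by
        apply Finset.sum_le_sum
        intro p hp
        rw [hmem] at hp
        obtain ⟨i, j⟩ := p
        obtain ⟨hi, hj⟩ := hp
        simp only [hσ, hr, hl]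
        by_cases hj0 : j = 0
        · subst hj0
          simp only [if_pos rfl]
          have := spread' hL hS (a := x) (b := x - i) (by omega)
          calc f (x - 1 - (i:ℤ)) * f (x + 1 - (0:ℕ)) = f (x + 1) * f ((x - i) - 1) := by
                ring_nf
            _ ≤ f x * f (x - i) := by
                have : f (x + 1) * (f (x - ↑i - 1)) ≤ f x * f (x - ↑i) := spread' hL hS (by omega)
                linarith [this]
            _ = f (x - (0:ℕ)) * f (x - i) := by norm_num
        · by_cases him : i = m
          · simp only [if_neg hj0, if_pos him, him]
            calc f (x - 1 - (m:ℤ)) * f (x + 1 - j) = f ((x - j) + 1) * f ((x - m) - 1) := by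
                  ring_nf
              _ ≤ f (x - j) * f (x - m) := spread' hL hS (by
                  have : (j:ℤ) ≤ (m:ℤ) := by exact_mod_cast hj
                  omega)
          · simp only [if_neg hj0, if_neg him]
            have hcast : ((j - 1 : ℕ) : ℤ) = (j:ℤ) - 1 := by
              omega
            have e1 : x - 1 - (i:ℤ) = x - ((i+1 : ℕ) : ℤ) := by push_cast; ring
            have e2 : x + 1 - (j:ℤ) = x - ((j - 1 : ℕ) : ℤ) := by rw [hcast]; ring
            rw [e1, e2]
    _ = ∑ p ∈ s, l p := by
        apply Finset.sum_nbij' σ τ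
        · intro p hp
          rw [hmem] at hp ⊢
          simp only [hσ]
          split_ifs <;> simp <;> omega
        · intro q hq
          rw [hmem] at hq ⊢
          simp only [hτ]
          split_ifs <;> simp <;> omega
        · intro p hp
          rw [hmem] at hp
          simp only [hσ, hτ]
          obtain ⟨i, j⟩ := p
          obtain ⟨hi, hj⟩ := hp
          by_cases h1 : j = 0 <;> by_cases h2 : i = m <;>
            simp only [h1, h2, if_true, if_pos, if_neg, if_false, Prod.ext_iff] <;>
            split_ifs <;> simp_all [Prod.ext_iff] <;> omega
        · intro q hq
          rw [hmem] at hq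
          simp only [hσ, hτ]
          obtain ⟨u, v⟩ := q
          obtain ⟨hu, hv⟩ := hq
          by_cases h1 : u = 0 <;> by_cases h2 : v = m <;>
            simp only [h1, h2, if_true, if_pos, if_neg, if_false, Prod.ext_iff] <;>
            split_ifs <;> simp_all [Prod.ext_iff] <;> omega
        · intro p hp
          rfl

end BoxLC

namespace BoxLC

def F : (n : ℕ) → (Fin n → ℕ) → ℤ → ℕ
  | 0, _, x => if x = 0 then 1 else 0
  | n+1, m, x => win (F n (fun i => m i.castSucc)) (m (Fin.last n)) x

lemma F_LC_IS : ∀ (n : ℕ) (m : Fin n → ℕ), LC (F n m) ∧ IS (F n m) := by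
  intro n
  induction n with
  | zero =>
    intro m
    constructor
    · intro x
      simp only [F]
      split_ifs <;> simp_all <;> omega
    · intro a b c hab hbc ha hc
      simp only [F] at *
      split_ifs at * <;> simp_all <;> omega
  | succ n ih =>
    intro m
    obtain ⟨hL, hS⟩ := ih (fun i => m i.castSucc)
    exact ⟨win_LC hL hS _, win_IS hS _⟩

lemma F_neg : ∀ (n : ℕ) (m : Fin n → ℕ) (x : ℤ), x < 0 → F n m x = 0 := by
  intro n
  induction n with
  | zero => intro m x hx; simp only [F]; split_ifs <;> omega
  | succ n ih =>
    intro m x hx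
    simp only [F, win]
    apply Finset.sum_eq_zero
    intro j _
    exact ih _ _ (by omega)

/-- The finset of box points with coordinate sum `k`. -/
def Dset (n : ℕ) (m : Fin n → ℕ) (k : ℕ) : Finset (Fin n → ℕ) :=
  (Finset.Nat.antidiagonalTuple n k).filter (fun a => ∀ i, a i ≤ m i)

lemma F_eq_card : ∀ (n : ℕ) (m : Fin n → ℕ) (k : ℕ), F n m (k : ℤ) = (Dset n m k).card := by
  intro n
  induction n with
  | zero =>
    intro m k
    simp only [F, Dset]
    cases k with
    | zero => simp [Finset.Nat.antidiagonalTuple_zero_zero]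
    | succ k => simp only [Finset.Nat.antidiagonalTuple_zero_succ, Finset.filter_empty,
        Finset.card_empty]; rw [if_neg (by omega)]
  | succ n ih =>
    intro m k
    set M := m (Fin.last n) with hM
    set m' : Fin n → ℕ := fun i => m i.castSucc with hm'
    have step1 : F (n+1) m (k : ℤ) =
        ∑ j ∈ Finset.range (M + 1), if j ≤ k then (Dset n m' (k - j)).card else 0 := by
      simp only [F, win]
      apply Finset.sum_congr rfl
      intro j _
      by_cases hjk : j ≤ k
      · rw [if_pos hjk]
        have : (k : ℤ) - j = ((k - j : ℕ) : ℤ) := by omega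
        rw [this, ih]
      · rw [if_neg hjk]
        exact F_neg _ _ _ (by omega)
    rw [step1]
    have step2 : (Dset (n+1) m k).card =
        ∑ j ∈ Finset.range (M + 1), ((Dset (n+1) m k).filter (fun a => a (Fin.last n) = j)).card := by
      apply Finset.card_eq_sum_card_fiberwise
      intro a ha
      simp only [Finset.mem_coe, Dset, Finset.mem_filter] at ha
      exact Finset.mem_range.mpr (Nat.lt_succ_of_le (ha.2 (Fin.last n)))
    rw [step2]
    apply Finset.sum_congr rfl
    intro j hjr
    by_cases hjk : j ≤ k
    · rw [if_pos hjk]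
      apply Finset.card_nbij' (fun (b : Fin n → ℕ) => (Fin.snoc b j : Fin (n+1) → ℕ))
          (fun (a : Fin (n+1) → ℕ) => (Fin.init a : Fin n → ℕ))
      · intro b hb
        simp only [Finset.mem_coe, Dset, Finset.mem_filter, Finset.Nat.mem_antidiagonalTuple] at hb ⊢
        obtain ⟨hsum, hbd⟩ := hb
        clear step1 step2
        refine ⟨⟨?_, ?_⟩, ?_⟩
        · rw [Fin.sum_univ_castSucc]
          simp only [Fin.snoc_castSucc, Fin.snoc_last]
          rw [hsum]
          omega
        · intro i
          refine Fin.lastCases (motive := fun i => Fin.snoc (α := fun _ => ℕ) b j i ≤ m i)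
            ?_ ?_ i
          · show Fin.snoc (α := fun _ => ℕ) b j (Fin.last n) ≤ m (Fin.last n)
            rw [Fin.snoc_last]
            exact Nat.lt_succ_iff.mp (Finset.mem_range.mp hjr)
          · intro i'
            show Fin.snoc (α := fun _ => ℕ) b j i'.castSucc ≤ m i'.castSucc
            rw [Fin.snoc_castSucc]
            exact hbd i'
        · exact Fin.snoc_last _ _
      · intro a ha
        simp only [Finset.mem_coe, Dset, Finset.mem_filter, Finset.Nat.mem_antidiagonalTuple] at ha ⊢
        obtain ⟨⟨hsum, hbd⟩, hlast⟩ := ha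
        refine ⟨?_, fun i => hbd i.castSucc⟩
        have hcs := Fin.sum_univ_castSucc (f := a) (n := n)
        rw [hcs, hlast] at hsum
        simp only [Fin.init]
        clear step1 step2
        omega
      · intro b _
        funext i
        simp [Fin.init, Fin.snoc_castSucc]
      · intro a ha
        simp only [Finset.mem_coe, Dset, Finset.mem_filter] at ha
        rw [← ha.2]
        exact Fin.snoc_init_self a
    · rw [if_neg hjk]
      symm
      rw [Finset.card_eq_zero]
      apply Finset.filter_eq_empty_iff.mpr
      intro a ha
      simp only [Dset, Finset.mem_filter, Finset.Nat.mem_antidiagonalTuple] at ha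
      intro hlast
      have hle : a (Fin.last n) ≤ ∑ i, a i :=
        Finset.single_le_sum (fun i _ => Nat.zero_le _) (Finset.mem_univ _)
      clear step1 step2
      omega

end BoxLC

namespace BoxLC

lemma natCard_eq (n : ℕ) (m : Fin n → ℕ) (k : ℕ) :
    Nat.card {a : Fin n → ℕ // (∀ i, a i ≤ m i) ∧ ∑ i, a i = k} = (Dset n m k).card := by
  have hset : {a : Fin n → ℕ | (∀ i, a i ≤ m i) ∧ ∑ i, a i = k} = ↑(Dset n m k) := by
    ext a
    simp only [Set.mem_setOf_eq, Dset, Finset.coe_filter, Finset.Nat.mem_antidiagonalTuple]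
    tauto
  have : Nat.card {a : Fin n → ℕ // (∀ i, a i ≤ m i) ∧ ∑ i, a i = k}
      = Nat.card {a : Fin n → ℕ | (∀ i, a i ≤ m i) ∧ ∑ i, a i = k} := rfl
  rw [this, hset, Nat.card_coe_set_eq, Set.ncard_coe_finset]

end BoxLC

/-- Log-concavity of the number of lattice points of the box `∏ i, {0, …, m i}` with
coordinate sum `k`. -/
theorem box_counting_log_concave (N : ℕ) (hN : 1 ≤ N) (m : Fin N → ℕ)
    (k : ℕ) (hk : 1 ≤ k) :
    Nat.card {a : Fin N → ℕ // (∀ i, a i ≤ m i) ∧ ∑ i, a i = k - 1} *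
        Nat.card {a : Fin N → ℕ // (∀ i, a i ≤ m i) ∧ ∑ i, a i = k + 1} ≤
      Nat.card {a : Fin N → ℕ // (∀ i, a i ≤ m i) ∧ ∑ i, a i = k} ^ 2 := by
  rw [BoxLC.natCard_eq, BoxLC.natCard_eq, BoxLC.natCard_eq,
    ← BoxLC.F_eq_card, ← BoxLC.F_eq_card, ← BoxLC.F_eq_card]
  have e1 : ((k - 1 : ℕ) : ℤ) = (k : ℤ) - 1 := by omega
  have e2 : ((k + 1 : ℕ) : ℤ) = (k : ℤ) + 1 := by push_cast; ring
  rw [e1, e2]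
  exact (BoxLC.F_LC_IS N m).1 (k : ℤ)
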